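/- Let S : ℝ^(d×d)_sym → ℝ^(d×d)_sym satisfy, for constants c > 0, h ≥ 0 and exponents 1 < s ≤ s_max with conjugates s', s'_max: c·S(ξ):ξ ≥ |ξ|^s + |S(ξ)|^(s') - h for all ξ. Fix θ ∈ (0,1) and define S^θ(ξ) := S(ξ) + θ·∇m(ξ) with m(ξ) = |ξ|^(s_max). Then there exist a constant c^θ > 0 and h^θ ≥ 0 (depending on c, h, θ, s_max) such that c^θ·S^θ(ξ):ξ ≥ |ξ|^(s_max) + |S^θ(ξ)|^(s'_max) - h^θ for all ξ. -/

import Mathlib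

open RealInnerProductSpace

lemma aux_rpow_succ (B t : ℝ) (hB : 0 ≤ B) (ht : t + 1 ≠ 0) : B ^ t * B = B ^ (t + 1) := by
  rcases eq_or_lt_of_le hB with h | h
  · rw [← h, Real.zero_rpow ht, mul_zero]
  · rw [Real.rpow_add h, Real.rpow_one]

lemma aux_add_rpow (a b q : ℝ) (ha : 0 ≤ a) (hb : 0 ≤ b) (hq : 0 ≤ q) :
    (a + b) ^ q ≤ 2 ^ q * a ^ q + 2 ^ q * b ^ q := by
  rcases le_total a b with hab | hab
  · calc (a + b) ^ q ≤ (2 * b) ^ q :=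
          Real.rpow_le_rpow (by linarith) (by linarith) hq
    _ = 2 ^ q * b ^ q := Real.mul_rpow (by norm_num) hb
    _ ≤ 2 ^ q * a ^ q + 2 ^ q * b ^ q := by
        have : (0:ℝ) ≤ 2 ^ q * a ^ q := by positivity
        linarith
  · calc (a + b) ^ q ≤ (2 * a) ^ q :=
          Real.rpow_le_rpow (by linarith) (by linarith) hq
    _ = 2 ^ q * a ^ q := Real.mul_rpow (by norm_num) ha
    _ ≤ 2 ^ q * a ^ q + 2 ^ q * b ^ q := by
        have : (0:ℝ) ≤ 2 ^ q * b ^ q := by positivity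
        linarith

lemma aux_gradient {V : Type*} [NormedAddCommGroup V] [InnerProductSpace ℝ V]
    [CompleteSpace V] (p : ℝ) (hp : 1 < p) (ξ : V) :
    gradient (fun ζ : V => ‖ζ‖ ^ p) ξ = (p * ‖ξ‖ ^ (p - 2)) • ξ := by
  apply HasGradientAt.gradient
  rw [hasGradientAt_iff_hasFDerivAt]
  convert hasFDerivAt_norm_rpow ξ hp using 1
  ext y
  simp [InnerProductSpace.toDual_apply_apply, real_inner_smul_left]
  ext y
  simp [InnerProductSpace.toDual_apply_apply, real_inner_smul_left]

/-- The purely real-arithmetic core of the coercivity estimate. -/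
lemma aux_final (c h s' q p θ A B I N K : ℝ)
    (hc : 0 < c) (hp0 : 0 < p) (hq0 : 0 < q)
    (hA0 : 0 ≤ A) (hB0 : 0 ≤ B) (hN0 : 0 ≤ N)
    (hqs' : q ≤ s')
    (hI : A ^ s' - h ≤ c * I)
    (hN : N ≤ A + p * B ^ (p - 1))
    (hBpq : (B ^ (p - 1)) ^ q = B ^ p)
    (hK2 : 2 ^ q ≤ K) (hKctp : 1 + 2 ^ q * p ^ q ≤ K * (c * θ * p)) (hK0 : 0 < K) :
    B ^ p + N ^ q - K * (1 + h) ≤ K * c * (I + θ * (p * B ^ p)) := by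
  have hAq0 : (0:ℝ) ≤ A ^ q := Real.rpow_nonneg hA0 q
  have hBp0 : (0:ℝ) ≤ B ^ p := Real.rpow_nonneg hB0 p
  have hNq : N ^ q ≤ 2 ^ q * A ^ q + 2 ^ q * (p ^ q * B ^ p) := by
    have h1 : N ^ q ≤ (A + p * B ^ (p - 1)) ^ q :=
      Real.rpow_le_rpow hN0 hN hq0.le
    have h2 := aux_add_rpow A (p * B ^ (p - 1)) q hA0 (by positivity) hq0.le
    have h3 : (p * B ^ (p - 1)) ^ q = p ^ q * B ^ p := by
      rw [Real.mul_rpow hp0.le (Real.rpow_nonneg hB0 _), hBpq]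
    rw [h3] at h2
    linarith
  have hAq : A ^ q ≤ A ^ s' + 1 := by
    rcases le_total A 1 with hA1 | hA1
    · have h1 : A ^ q ≤ 1 := Real.rpow_le_one hA0 hA1 hq0.le
      have h2 : (0:ℝ) ≤ A ^ s' := Real.rpow_nonneg hA0 _
      linarith
    · have h1 : A ^ q ≤ A ^ s' := Real.rpow_le_rpow_of_exponent_le hA1 hqs'
      linarith
  have hcI : A ^ q - 1 - h ≤ c * I := by linarith
  have e1 : K * (A ^ q - 1 - h) ≤ K * (c * I) :=
    mul_le_mul_of_nonneg_left hcI hK0.le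
  have e2 : 2 ^ q * A ^ q ≤ K * A ^ q := mul_le_mul_of_nonneg_right hK2 hAq0
  have e3 : (1 + 2 ^ q * p ^ q) * B ^ p ≤ K * (c * θ * p) * B ^ p :=
    mul_le_mul_of_nonneg_right hKctp hBp0
  nlinarith [e1, e2, e3, hNq, hAq0, hBp0]

/-- Coercivity of the regularized stress tensor `S^θ = S + θ ∇m`, `m(ξ) = |ξ|^{s_max}`:
if `c S(ξ):ξ ≥ |ξ|^s + |S(ξ)|^{s'} - h`, then there are `c^θ > 0` and `h^θ ≥ 0`
with `c^θ S^θ(ξ):ξ ≥ |ξ|^{s_max} + |S^θ(ξ)|^{s'_max} - h^θ`. -/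
theorem stmt_6 {V : Type*} [NormedAddCommGroup V] [InnerProductSpace ℝ V]
    [CompleteSpace V]
    (S : V → V) (c h s s_max s' s'_max : ℝ)
    (hc : 0 < c) (hh : 0 ≤ h) (hs1 : 1 < s) (hss : s ≤ s_max)
    (hs' : s' = s / (s - 1)) (hs'max : s'_max = s_max / (s_max - 1))
    (hcoer : ∀ ξ : V, ‖ξ‖ ^ s + ‖S ξ‖ ^ s' - h ≤ c * ⟪S ξ, ξ⟫)
    (θ : ℝ) (hθ : θ ∈ Set.Ioo (0 : ℝ) 1)
    (Sθ : V → V)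
    (hSθ : Sθ = fun ξ => S ξ + θ • gradient (fun ζ => ‖ζ‖ ^ s_max) ξ) :
    ∃ cθ : ℝ, 0 < cθ ∧ ∃ hθ' : ℝ, 0 ≤ hθ' ∧
      ∀ ξ : V, ‖ξ‖ ^ s_max + ‖Sθ ξ‖ ^ s'_max - hθ' ≤ cθ * ⟪Sθ ξ, ξ⟫ := by
  obtain ⟨hθ0, hθ1⟩ := hθ
  have hp : 1 < s_max := lt_of_lt_of_le hs1 hss
  have hp0 : 0 < s_max := by linarith
  have hp1 : s_max - 1 ≠ 0 := by intro h'; linarith [sub_eq_zero.mp h']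
  have hq : 1 < s'_max := by
    rw [hs'max, lt_div_iff₀ (by linarith : (0:ℝ) < s_max - 1)]
    linarith
  have hq0 : 0 < s'_max := by linarith
  have hqs' : s'_max ≤ s' := by
    rw [hs'max, hs', div_le_div_iff₀ (by linarith : (0:ℝ) < s_max - 1)
      (by linarith : (0:ℝ) < s - 1)]
    nlinarith
  -- the constant K
  obtain ⟨K, hKdef⟩ : ∃ K : ℝ,
      K = 2 ^ s'_max + (1 + 2 ^ s'_max * s_max ^ s'_max) / (c * θ * s_max) := ⟨_, rfl⟩
  have h2q : (0:ℝ) < 2 ^ s'_max := by positivity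
  have hctp : (0:ℝ) < c * θ * s_max := by positivity
  have hK2 : 2 ^ s'_max ≤ K := by
    rw [hKdef]
    have : (0:ℝ) ≤ (1 + 2 ^ s'_max * s_max ^ s'_max) / (c * θ * s_max) := by positivity
    linarith
  have hK0 : 0 < K := lt_of_lt_of_le h2q hK2
  have hKctp : 1 + 2 ^ s'_max * s_max ^ s'_max ≤ K * (c * θ * s_max) := by
    rw [hKdef, add_mul, div_mul_cancel₀ _ (ne_of_gt hctp)]
    nlinarith [Real.rpow_nonneg (le_of_lt hp0) s'_max]
  refine ⟨K * c, by positivity, K * (1 + h), by positivity, fun ξ => ?_⟩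
  -- closed form for Sθ
  have hSθξ : Sθ ξ = S ξ + (θ * (s_max * ‖ξ‖ ^ (s_max - 2))) • ξ := by
    rw [hSθ]
    simp only [aux_gradient s_max hp ξ, smul_smul]
  -- power bookkeeping
  have hB0 : (0:ℝ) ≤ ‖ξ‖ := norm_nonneg ξ
  have hBpow1 : ‖ξ‖ ^ (s_max - 2) * ‖ξ‖ = ‖ξ‖ ^ (s_max - 1) := by
    have h' : s_max - 2 + 1 ≠ 0 := by intro h'; linarith
    rw [aux_rpow_succ ‖ξ‖ (s_max - 2) hB0 h',
      show s_max - 2 + 1 = s_max - 1 from by ring]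
  have hBpow2 : ‖ξ‖ ^ (s_max - 1) * ‖ξ‖ = ‖ξ‖ ^ s_max := by
    have h' : s_max - 1 + 1 ≠ 0 := by intro h'; linarith
    rw [aux_rpow_succ ‖ξ‖ (s_max - 1) hB0 h',
      show s_max - 1 + 1 = s_max from by ring]
  have hBpq : (‖ξ‖ ^ (s_max - 1)) ^ s'_max = ‖ξ‖ ^ s_max := by
    rw [← Real.rpow_mul hB0]
    congr 1
    rw [hs'max]
    field_simp
  -- the inner product
  have hinner : ⟪Sθ ξ, ξ⟫ = ⟪S ξ, ξ⟫ + θ * (s_max * ‖ξ‖ ^ s_max) := by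
    rw [hSθξ, inner_add_left, real_inner_smul_left, real_inner_self_eq_norm_mul_norm]
    rw [show θ * (s_max * ‖ξ‖ ^ (s_max - 2)) * (‖ξ‖ * ‖ξ‖)
        = θ * (s_max * (‖ξ‖ ^ (s_max - 2) * ‖ξ‖ * ‖ξ‖)) from by ring, hBpow1, hBpow2]
  -- the norm bound
  have hnorm : ‖Sθ ξ‖ ≤ ‖S ξ‖ + s_max * ‖ξ‖ ^ (s_max - 1) := by
    rw [hSθξ]
    refine le_trans (norm_add_le _ _) ?_
    have h1 : ‖(θ * (s_max * ‖ξ‖ ^ (s_max - 2))) • ξ‖ ≤ s_max * ‖ξ‖ ^ (s_max - 1) := by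
      rw [norm_smul, Real.norm_eq_abs,
        abs_of_nonneg (by positivity : (0:ℝ) ≤ θ * (s_max * ‖ξ‖ ^ (s_max - 2)))]
      have h2 : θ * (s_max * ‖ξ‖ ^ (s_max - 2)) * ‖ξ‖
          ≤ 1 * (s_max * ‖ξ‖ ^ (s_max - 2)) * ‖ξ‖ := by
        have : (0:ℝ) ≤ (s_max * ‖ξ‖ ^ (s_max - 2)) * ‖ξ‖ := by positivity
        nlinarith
      calc θ * (s_max * ‖ξ‖ ^ (s_max - 2)) * ‖ξ‖
          ≤ 1 * (s_max * ‖ξ‖ ^ (s_max - 2)) * ‖ξ‖ := h2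
        _ = s_max * (‖ξ‖ ^ (s_max - 2) * ‖ξ‖) := by ring
        _ = s_max * ‖ξ‖ ^ (s_max - 1) := by rw [hBpow1]
    linarith
  -- coercivity at ξ
  have hI : ‖S ξ‖ ^ s' - h ≤ c * ⟪S ξ, ξ⟫ := by
    have h1 := hcoer ξ
    have h2 : (0:ℝ) ≤ ‖ξ‖ ^ s := Real.rpow_nonneg hB0 s
    linarith
  have := aux_final c h s' s'_max s_max θ ‖S ξ‖ ‖ξ‖ ⟪S ξ, ξ⟫ ‖Sθ ξ‖ K
    hc hp0 hq0 (norm_nonneg _) hB0 (norm_nonneg _) hqs' hI hnorm hBpq hK2 hKctp hK0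
  rw [hinner]
  calc ‖ξ‖ ^ s_max + ‖Sθ ξ‖ ^ s'_max - K * (1 + h)
      ≤ K * c * (⟪S ξ, ξ⟫ + θ * (s_max * ‖ξ‖ ^ s_max)) := this
    _ = K * c * (⟪S ξ, ξ⟫ + θ * (s_max * ‖ξ‖ ^ s_max)) := rfl
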